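/- Let f : Y → X be a morphism of schemes with X = Spec R affine. Then the composite functor f^* ∘ (−)~ : Mod R → Qcoh Y (sheafification followed by pullback) is naturally isomorphic to − ⊗_R O_Y, where O_Y is given a left R-module structure via the ring homomorphism R → Hom_Y(O_Y, O_Y) obtained from R → Hom_R(R, R) (multiplication), applying f^* ∘ (−)~, and the natural isomorphism f^* O_X ≅ O_Y. -/

import Mathlib

open CategoryTheory CategoryTheory.Limits MulOpposite

universe u

section Preamble

variable (k : Type*) [CommRing k] (R : Type u) [Ring R] [Algebra k R]
variable (A : Type*) [Category.{u} A] [Preadditive A] [CategoryTheory.Linear k A]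

/-- A left `R`-module in the `k`-linear category `A`: an object together with a
ring homomorphism `ρ : R → End 𝓕` which is `k`-linear, i.e. a `k`-algebra homomorphism. -/
structure LMod where
  X : A
  ρ : R →+* End X
  algebraMap_smul' : ∀ a : k, ρ (algebraMap k R a) = a • (𝟙 X)

variable {k R A}

/-- the `k`-module structure on right `R`-modules obtained by restriction of scalars -/
noncomputable instance (M : ModuleCat.{u} Rᵐᵒᵖ) : Module k M :=
  RestrictScalars.module k Rᵐᵒᵖ M

instance (M : ModuleCat.{u} Rᵐᵒᵖ) : IsScalarTower k Rᵐᵒᵖ M :=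
  RestrictScalars.isScalarTower k Rᵐᵒᵖ M

/-- The `k`-linear structure on the category of right `R`-modules, `a • m = m · γ(a)`. -/
noncomputable instance : CategoryTheory.Linear k (ModuleCat.{u} Rᵐᵒᵖ) where
  homModule _ _ := ModuleCat.Hom.instModule
  smul_comp := by
    intros
    ext
    simp

/-- `Hom_A(𝓕, N)` is a right `R`-module via `α · r := ρ(r) ≫ α`. -/
instance homRMod (F : LMod k R A) (N : A) : Module Rᵐᵒᵖ (F.X ⟶ N) where
  smul r α := F.ρ r.unop ≫ α
  one_smul α := by show F.ρ _ ≫ α = α; simp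
  mul_smul r s α := by
    show F.ρ _ ≫ α = F.ρ _ ≫ F.ρ _ ≫ α
    rw [unop_mul, map_mul, End.mul_def, Category.assoc]
  smul_zero r := by show _ ≫ (0 : F.X ⟶ N) = 0; simp
  smul_add r α β := by show _ ≫ (α + β) = _ ≫ α + _ ≫ β; simp
  add_smul r s α := by
    show F.ρ _ ≫ α = F.ρ _ ≫ α + F.ρ _ ≫ α
    rw [MulOpposite.unop_add, map_add]; exact Preadditive.add_comp _ _ _ _ _ _
  zero_smul α := by show F.ρ _ ≫ α = 0; rw [MulOpposite.unop_zero, map_zero]; exact Limits.zero_comp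

lemma homRMod_smul_def (F : LMod k R A) {N : A} (r : Rᵐᵒᵖ) (α : F.X ⟶ N) :
    r • α = F.ρ r.unop ≫ α := rfl

/-- The functor `Hom_A(𝓕, -) : A ⥤ Mod R`. -/
noncomputable def homFunctor (F : LMod k R A) : A ⥤ ModuleCat.{u} Rᵐᵒᵖ where
  obj N := ModuleCat.of Rᵐᵒᵖ (F.X ⟶ N)
  map {N N'} f := ModuleCat.ofHom
    { toFun := fun α => α ≫ f
      map_add' := fun α β => Preadditive.add_comp _ _ _ _ _ _
      map_smul' := fun r α => by
        show (F.ρ r.unop ≫ α) ≫ f = F.ρ r.unop ≫ (α ≫ f)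
        rw [Category.assoc] }
  map_id N := by ext α; exact Category.comp_id α
  map_comp f g := by ext α; exact (Category.assoc _ _ _).symm

/-- `R` as a right module over itself. -/
noncomputable abbrev RR : ModuleCat.{u} Rᵐᵒᵖ := ModuleCat.of Rᵐᵒᵖ Rᵐᵒᵖ

variable (R) in
/-- left multiplication `μ_x` by `x` on `R`, a right `R`-module map -/
def mulMap (x : R) : (RR : ModuleCat.{u} Rᵐᵒᵖ) ⟶ RR := ModuleCat.ofHom {
  toFun r := op (x * r.unop)
  map_add' r s := by
    apply unop_injective
    show x * (r + s).unop = _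
    rw [show (r + s).unop = r.unop + s.unop from rfl, mul_add]; rfl
  map_smul' s t := by
    apply unop_injective
    show x * (s • t).unop = ((s • op (x * t.unop)).unop)
    rw [show (s • t).unop = t.unop * s.unop from rfl,
      show (s • op (x * t.unop)).unop = (x * t.unop) * s.unop from rfl, mul_assoc] }

/-- Morphisms `𝓕 → 𝓖` of left `R`-modules in `A` induce natural transformations
`Hom_A(𝓖,-) ⟶ Hom_A(𝓕,-)`. -/
noncomputable def homPre {F G : LMod k R A} (φ : F.X ⟶ G.X)
    (h : ∀ r : R, F.ρ r ≫ φ = φ ≫ G.ρ r) : homFunctor G ⟶ homFunctor F where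
  app N := ModuleCat.ofHom
    { toFun := fun α => φ ≫ α
      map_add' := fun α β => Preadditive.comp_add _ _ _ _ _ _
      map_smul' := fun r α => by
        show φ ≫ G.ρ r.unop ≫ α = F.ρ r.unop ≫ φ ≫ α
        rw [← Category.assoc, ← h, Category.assoc] }
  naturality N N' f := by ext α; exact (Category.assoc _ _ _).symm

/-- `M ⊗ φ` : the natural transformation `- ⊗_R 𝓕 ⟶ - ⊗_R 𝓖` induced by `φ : 𝓕 ⟶ 𝓖`,
obtained as the conjugate (mate) of `homPre φ`. -/
noncomputable def tensorMap {F G : LMod k R A} {TF TG : ModuleCat.{u} Rᵐᵒᵖ ⥤ A}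
    (adjF : TF ⊣ homFunctor F) (adjG : TG ⊣ homFunctor G) (φ : F.X ⟶ G.X)
    (h : ∀ r : R, F.ρ r ≫ φ = φ ≫ G.ρ r) : TF ⟶ TG :=
  (conjugateEquiv adjG adjF).symm (homPre φ h)

/-- The canonical map `ξ_𝓕 : 𝓕 ⟶ R ⊗_R 𝓕`. -/
noncomputable def xi {F : LMod k R A} {TF : ModuleCat.{u} Rᵐᵒᵖ ⥤ A}
    (adjF : TF ⊣ homFunctor F) : F.X ⟶ TF.obj RR :=
  (adjF.unit.app RR) (1 : Rᵐᵒᵖ)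

end Preamble

section WattsProof

open CategoryTheory CategoryTheory.Limits

/-- A general helper: if a natural transformation is an isomorphism on each object of a
diagram, and both functors preserve a colimit cocone, it is an isomorphism at the
colimit point. -/
lemma watts_isIso_app_of_isColimit {J C D : Type*} [Category J] [Category C] [Category D]
    {K : J ⥤ C} {c : Cocone K} {F T : C ⥤ D} (θ : T ⟶ F)
    (hT : IsColimit (T.mapCocone c)) (hF : IsColimit (F.mapCocone c))
    (h : ∀ j, IsIso (θ.app (K.obj j))) : IsIso (θ.app c.pt) := by
  have hw : ∀ j, IsIso ((Functor.whiskerLeft K θ).app j) := h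
  have : IsIso (Functor.whiskerLeft K θ) := NatIso.isIso_of_isIso_app _
  let e2 : IsColimit ((Cocone.precompose (asIso (Functor.whiskerLeft K θ)).hom).obj (F.mapCocone c)) :=
    (IsColimit.precomposeHomEquiv (asIso (Functor.whiskerLeft K θ)) _).symm hF
  have heq : θ.app c.pt = (hT.coconePointUniqueUpToIso e2).hom := by
    apply hT.hom_ext; intro j
    rw [IsColimit.comp_coconePointUniqueUpToIso_hom]
    exact θ.naturality (c.ι.app j)
  rw [heq]; infer_instance

variable {R : Type u} [Ring R]

/-- the map `R → M`, `t ↦ t • m`, as a morphism of right `R`-modules. -/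
noncomputable def wlam (M : ModuleCat.{u} Rᵐᵒᵖ) (m : M) : (RR : ModuleCat.{u} Rᵐᵒᵖ) ⟶ M :=
  ModuleCat.ofHom
  { toFun := fun t => t • m
    map_add' := fun s t => add_smul s t m
    map_smul' := fun s t => by
      show (s * t) • m = s • t • m
      exact mul_smul s t m }

lemma wlam_naturality {M M' : ModuleCat.{u} Rᵐᵒᵖ} (g : M ⟶ M') (m : M) :
    wlam M m ≫ g = wlam M' (g m) := by
  refine ModuleCat.hom_ext (LinearMap.ext fun (t : Rᵐᵒᵖ) => ?_)
  show g (t • m) = t • g m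
  exact g.hom.map_smul t m

lemma wlam_one : wlam (RR : ModuleCat.{u} Rᵐᵒᵖ) ((1 : Rᵐᵒᵖ)) = 𝟙 _ := by
  refine ModuleCat.hom_ext (LinearMap.ext fun (t : Rᵐᵒᵖ) => ?_)
  show (t * 1 : Rᵐᵒᵖ) = t
  exact mul_one t

lemma wlam_apply (M : ModuleCat.{u} Rᵐᵒᵖ) (m : M) (t : Rᵐᵒᵖ) : wlam M m t = t • m := rfl

lemma wlam_smul (M : ModuleCat.{u} Rᵐᵒᵖ) (s : Rᵐᵒᵖ) (m : M) :
    wlam M (s • m) = mulMap R s.unop ≫ wlam M m := by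
  refine ModuleCat.hom_ext (LinearMap.ext fun (t : Rᵐᵒᵖ) => ?_)
  show t • s • m = (op (s.unop * t.unop)) • m
  rw [← mul_smul]
  rfl

lemma wlam_zero (M : ModuleCat.{u} Rᵐᵒᵖ) : wlam M 0 = 0 := by
  refine ModuleCat.hom_ext (LinearMap.ext fun (t : Rᵐᵒᵖ) => ?_)
  show t • (0 : M) = 0
  exact smul_zero t

/-- Evaluation at `1` is a bijection `Hom(R, P) ≃ P`. -/
noncomputable def wattsEv1 (P : ModuleCat.{u} Rᵐᵒᵖ) :
    ((RR : ModuleCat.{u} Rᵐᵒᵖ) ⟶ P) ≃ P where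
  toFun ψ := ψ (1 : Rᵐᵒᵖ)
  invFun p := wlam P p
  left_inv ψ := by
    refine ModuleCat.hom_ext (LinearMap.ext fun (t : Rᵐᵒᵖ) => ?_)
    show t • ψ (1 : Rᵐᵒᵖ) = ψ t
    rw [← ψ.hom.map_smul]
    congr 1
    show (t * 1 : Rᵐᵒᵖ) = t
    exact mul_one t
  right_inv p := by show (1 : Rᵐᵒᵖ) • p = p; exact one_smul _ p

section Theta

variable {A : Type*} [Category.{u} A] [Preadditive A] [CategoryTheory.Linear ℤ A]
variable (F : ModuleCat.{u} Rᵐᵒᵖ ⥤ A) (L : LMod ℤ R A) (e : F.obj RR ≅ L.X)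

/-- The comparison map `M ⟶ Hom(L.X, F M)`, `m ↦ e.inv ≫ F (wlam m)`. -/
noncomputable def wattsLam [F.Additive]
    (hρ : ∀ x : R, L.ρ x = e.inv ≫ F.map (mulMap R x) ≫ e.hom)
    (M : ModuleCat.{u} Rᵐᵒᵖ) : M ⟶ (homFunctor L).obj (F.obj M) := ModuleCat.ofHom {
  toFun m := e.inv ≫ F.map (wlam M m)
  map_add' m m' := by
    have h : wlam M (m + m') = wlam M m + wlam M m' := by
      refine ModuleCat.hom_ext (LinearMap.ext fun (t : Rᵐᵒᵖ) => ?_); exact smul_add t m m'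
    show e.inv ≫ F.map (wlam M (m + m')) =
      e.inv ≫ F.map (wlam M m) + e.inv ≫ F.map (wlam M m')
    rw [h, F.map_add, Preadditive.comp_add]
  map_smul' s m := by
    show e.inv ≫ F.map (wlam M (s • m)) = s • (e.inv ≫ F.map (wlam M m))
    rw [homRMod_smul_def, hρ, wlam_smul, F.map_comp]
    simp only [Category.assoc, Iso.hom_inv_id_assoc] }

lemma wattsLam_apply [F.Additive]
    (hρ : ∀ x : R, L.ρ x = e.inv ≫ F.map (mulMap R x) ≫ e.hom)
    (M : ModuleCat.{u} Rᵐᵒᵖ) (m : M) :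
    wattsLam F L e hρ M m = e.inv ≫ F.map (wlam M m) := rfl

variable (T : ModuleCat.{u} Rᵐᵒᵖ ⥤ A) (adj : T ⊣ homFunctor L)

/-- The comparison natural transformation `T ⟶ F`. -/
noncomputable def wattsTheta [F.Additive]
    (hρ : ∀ x : R, L.ρ x = e.inv ≫ F.map (mulMap R x) ≫ e.hom) : T ⟶ F where
  app M := (adj.homEquiv M (F.obj M)).symm (wattsLam F L e hρ M)
  naturality {M M'} g := by
    apply (adj.homEquiv M (F.obj M')).injective
    rw [Adjunction.homEquiv_naturality_left, Adjunction.homEquiv_naturality_right,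
      Equiv.apply_symm_apply, Equiv.apply_symm_apply]
    ext m
    show wattsLam F L e hρ M' (g m) =
      ((homFunctor L).map (F.map g)) (wattsLam F L e hρ M m)
    show e.inv ≫ F.map (wlam M' (g m)) = (e.inv ≫ F.map (wlam M m)) ≫ F.map g
    rw [← wlam_naturality, F.map_comp, Category.assoc]


lemma wattsTheta_isIso_RR [F.Additive]
    (hρ : ∀ x : R, L.ρ x = e.inv ≫ F.map (mulMap R x) ≫ e.hom) :
    IsIso ((wattsTheta F L e T adj hρ).app (RR : ModuleCat.{u} Rᵐᵒᵖ)) := by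
  apply isIso_of_coyoneda_map_bijective
  intro N
  have hcomp : ∀ (β : F.obj (RR : ModuleCat.{u} Rᵐᵒᵖ) ⟶ N),
      (wattsTheta F L e T adj hρ).app (RR : ModuleCat.{u} Rᵐᵒᵖ) ≫ β
        = (adj.homEquiv _ N).symm ((wattsEv1 _).symm (e.inv ≫ β)) := by
    intro β
    apply (adj.homEquiv _ N).injective
    rw [Equiv.apply_symm_apply]
    apply (wattsEv1 _).injective
    erw [Equiv.apply_symm_apply]
    rw [Adjunction.homEquiv_naturality_right]
    show (((adj.homEquiv _ _) ((wattsTheta F L e T adj hρ).app _)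
      ≫ (homFunctor L).map β) : _ ⟶ _) (1 : Rᵐᵒᵖ) = e.inv ≫ β
    have happ : (adj.homEquiv _ _) ((wattsTheta F L e T adj hρ).app (RR : ModuleCat.{u} Rᵐᵒᵖ))
        = wattsLam F L e hρ (RR : ModuleCat.{u} Rᵐᵒᵖ) := Equiv.apply_symm_apply _ _
    rw [happ]
    show (wattsLam F L e hρ (RR : ModuleCat.{u} Rᵐᵒᵖ) ((1 : Rᵐᵒᵖ))) ≫ β = e.inv ≫ β
    rw [wattsLam_apply, wlam_one, F.map_id, Category.comp_id]
  have hfun : (fun (β : F.obj (RR : ModuleCat.{u} Rᵐᵒᵖ) ⟶ N)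
        => (wattsTheta F L e T adj hρ).app (RR : ModuleCat.{u} Rᵐᵒᵖ) ≫ β)
      = ((adj.homEquiv _ N).symm ∘ (wattsEv1 _).symm) ∘ (fun β => e.inv ≫ β) := funext hcomp
  rw [hfun]
  refine (((adj.homEquiv _ N).symm.bijective).comp ((wattsEv1 _).symm.bijective)).comp ?_
  exact (Equiv.mk (fun β => e.inv ≫ β) (fun γ => e.hom ≫ γ)
    (fun β => by simp) (fun γ => by simp)).bijective

end Theta


lemma watts_epi_desc (M : ModuleCat.{u} Rᵐᵒᵖ) :
    Epi (Sigma.desc (fun m => wlam M m) :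
      (∐ fun (_ : M) => (RR : ModuleCat.{u} Rᵐᵒᵖ)) ⟶ M) := by
  rw [ModuleCat.epi_iff_surjective]
  intro m
  refine ⟨(Sigma.ι (fun (_ : M) => (RR : ModuleCat.{u} Rᵐᵒᵖ)) m) (1 : Rᵐᵒᵖ), ?_⟩
  have h1 : Sigma.ι (fun (_ : M) => (RR : ModuleCat.{u} Rᵐᵒᵖ)) m
      ≫ Sigma.desc (fun m => wlam M m) = wlam M m := Sigma.ι_desc _ _
  have h2 := congrArg (fun (φ : (RR : ModuleCat.{u} Rᵐᵒᵖ) ⟶ M) => φ (1 : Rᵐᵒᵖ)) h1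
  exact h2.trans (one_smul _ m)

lemma watts_main {A : Type*} [Category.{u} A] [Preadditive A] [CategoryTheory.Linear ℤ A]
    (F : ModuleCat.{u} Rᵐᵒᵖ ⥤ A) [F.Additive] [PreservesFiniteColimits F]
    [∀ ι : Type u, PreservesColimitsOfShape (Discrete ι) F]
    (L : LMod ℤ R A) (e : F.obj (RR : ModuleCat.{u} Rᵐᵒᵖ) ≅ L.X)
    (hρ : ∀ x : R, L.ρ x = e.inv ≫ F.map (mulMap R x) ≫ e.hom)
    (T : ModuleCat.{u} Rᵐᵒᵖ ⥤ A) (adj : T ⊣ homFunctor L) :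
    Nonempty (F ≅ T) := by
  letI hTcol : PreservesColimitsOfSize.{u, u} T := adj.leftAdjoint_preservesColimits
  let θ := wattsTheta F L e T adj hρ
  have hRR : IsIso (θ.app (RR : ModuleCat.{u} Rᵐᵒᵖ)) := wattsTheta_isIso_RR F L e T adj hρ
  have hSigma : ∀ (ι : Type u), IsIso (θ.app (∐ fun (_ : ι) => (RR : ModuleCat.{u} Rᵐᵒᵖ))) := by
    intro ι
    exact watts_isIso_app_of_isColimit θ
      (isColimitOfPreserves T
        (colimit.isColimit (Discrete.functor fun (_ : ι) => (RR : ModuleCat.{u} Rᵐᵒᵖ))))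
      (isColimitOfPreserves F
        (colimit.isColimit (Discrete.functor fun (_ : ι) => (RR : ModuleCat.{u} Rᵐᵒᵖ))))
      (fun _ => hRR)
  have hM : ∀ M : ModuleCat.{u} Rᵐᵒᵖ, IsIso (θ.app M) := by
    intro M
    let p : (∐ fun (_ : M) => (RR : ModuleCat.{u} Rᵐᵒᵖ)) ⟶ M := Sigma.desc (fun m => wlam M m)
    haveI hp : Epi p := watts_epi_desc M
    let q : (∐ fun (_ : ↑(kernel p)) => (RR : ModuleCat.{u} Rᵐᵒᵖ)) ⟶ kernel p :=
      Sigma.desc (fun x => wlam (kernel p) x)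
    haveI hq : Epi q := watts_epi_desc (kernel p)
    have hcolim := isCokernelEpiComp
      (Abelian.epiIsCokernelOfKernel _ (kernelIsKernel p)) q (h := q ≫ kernel.ι p) rfl
    exact watts_isIso_app_of_isColimit θ
      (isColimitOfPreserves T hcolim) (isColimitOfPreserves F hcolim)
      (fun j => by cases j <;> exact hSigma _)
  haveI : IsIso θ := NatIso.isIso_of_isIso_app θ
  exact ⟨(asIso θ).symm⟩


end WattsProof



open AlgebraicGeometry

/-- The category of quasi-coherent sheaves on a scheme. -/
abbrev QCoh (X : Scheme.{u}) :=
  CategoryTheory.ObjectProperty.FullSubcategory (fun M : X.Modules => SheafOfModules.IsQuasicoherent M)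

/-- **Watts's theorem for an affine source** (the Example of §4).  Let `X = Spec R` be
affine and `f : Y ⟶ X` a morphism of schemes.  Let `tilde : Mod R ⥤ Qcoh X` be the
(quasi-inverse to global sections) equivalence and `fstar : Qcoh X ⥤ Qcoh Y` the
pullback functor along `f`, so `F = f^* ∘ (-)~ : Mod R ⥤ Qcoh Y` is right exact and
commutes with direct sums.  Then `F ≅ - ⊗_R 𝒪_Y`, where `𝒪_Y` (the structure sheaf,
i.e. the unit sheaf of modules) is an `R`-module object via
`ρ(x) = e⁻¹ ∘ F(μ_x) ∘ e` for the canonical isomorphism `e : F(R) = f^* 𝒪_X ≅ 𝒪_Y`,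
and `- ⊗_R 𝒪_Y` is any left adjoint of `Hom_Y(𝒪_Y, -) : Qcoh Y ⥤ Mod R`. -/
theorem watts_affine_pullback
    (R : Type u) [CommRing R]
    (Y : Scheme.{u}) (f : Y ⟶ Spec (CommRingCat.of R))
    (tilde : ModuleCat.{u} Rᵐᵒᵖ ⥤ QCoh (Spec (CommRingCat.of R)))
    (htilde : tilde.IsEquivalence)
    (fstar : QCoh (Spec (CommRingCat.of R)) ⥤ QCoh Y)
    [(tilde ⋙ fstar).Additive]
    [PreservesFiniteColimits (tilde ⋙ fstar)]
    [∀ ι : Type u, PreservesColimitsOfShape (Discrete ι) (tilde ⋙ fstar)]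
    (hO : SheafOfModules.IsQuasicoherent (R := Y.ringCatSheaf) (SheafOfModules.unit Y.ringCatSheaf))
    (e : (tilde ⋙ fstar).obj (RR : ModuleCat.{u} Rᵐᵒᵖ) ≅
      (⟨SheafOfModules.unit Y.ringCatSheaf, hO⟩ : QCoh Y))
    (ρ : R →+* End (⟨SheafOfModules.unit Y.ringCatSheaf, hO⟩ : QCoh Y))
    (hρ : ∀ x : R, ρ x = e.inv ≫ (tilde ⋙ fstar).map (mulMap R x) ≫ e.hom)
    (halg : ∀ a : ℤ, ρ (algebraMap ℤ R a) =
      a • 𝟙 (⟨SheafOfModules.unit Y.ringCatSheaf, hO⟩ : QCoh Y))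
    (T : ModuleCat.{u} Rᵐᵒᵖ ⥤ QCoh Y)
    (adj : T ⊣ homFunctor
      (⟨⟨SheafOfModules.unit Y.ringCatSheaf, hO⟩, ρ, halg⟩ : LMod ℤ R (QCoh Y))) :
    Nonempty ((tilde ⋙ fstar) ≅ T) :=
    watts_main (tilde ⋙ fstar)
      (⟨⟨SheafOfModules.unit Y.ringCatSheaf, hO⟩, ρ, halg⟩ : LMod ℤ R (QCoh Y)) e hρ T adj
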